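/- (Proposition 1, adjoint gradient formula.) Let f : (Fin N → ℝ) → (Fin N → ℝ) be continuously differentiable, let w : ℝ → (Fin N → ℝ) solve w'(t) = f(w(t)) on [t₀, t_k] with w(t₀) = a, and let L : ℝ → Matrix (Fin N) (Fin N) ℝ solve the variational equation L'(t) = Df(w(t)) * L(t) on [t₀, t_k] with L(t₀) = 1, where Df(w(t)) is the Jacobian matrix of f at w(t). Suppose φ : (Fin N → ℝ) → (Fin N → ℝ) is differentiable at a with Jacobian matrix L(t_k) (φ is the flow map from time t₀ to time t_k). Let C be a q × N real matrix, e_j the j-th standard basis vector of Fin q → ℝ, and let ξ : ℝ → (Fin N → ℝ) satisfy -ξ'(t) = (Df(w(t)))ᵀ *ᵥ ξ(t) on [t₀, t_k] with ξ(t_k) = Cᵀ *ᵥ e_j. Then the gradient at a of the scalar function a ↦ ⟨e_j, C *ᵥ φ(a)⟩ equals ξ(t₀); equivalently, (L(t_k))ᵀ *ᵥ (Cᵀ *ᵥ e_j) = ξ(t₀). -/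

import Mathlib

open Matrix

attribute [local instance] Matrix.normedAddCommGroup Matrix.normedSpace

/-- The Jacobian matrix of a map `f : (Fin N → ℝ) → (Fin N → ℝ)` at a point. -/
noncomputable def jacobian {N : ℕ} (f : (Fin N → ℝ) → (Fin N → ℝ)) (x : Fin N → ℝ) :
    Matrix (Fin N) (Fin N) ℝ :=
  LinearMap.toMatrix' (fderiv ℝ f x : (Fin N → ℝ) →ₗ[ℝ] (Fin N → ℝ))

/-- The continuous linear functional `x' ↦ ⟨v, x'⟩` on `Fin N → ℝ`
(Euclidean inner product against a fixed vector `v`). -/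
noncomputable def dotCLM {N : ℕ} (v : Fin N → ℝ) : (Fin N → ℝ) →L[ℝ] ℝ :=
  LinearMap.toContinuousLinearMap
    { toFun := fun x => v ⬝ᵥ x
      map_add' := fun x y => by simp [dotProduct_add]
      map_smul' := fun c x => by simp [dotProduct_smul] }

/-- Proposition 1 (adjoint gradient formula). Let `w` solve `w' = f (w)` on `[t₀, t_k]`
with `w t₀ = a`, let `L` solve the variational equation `L' = Df(w t) * L`, `L t₀ = 1`,
and let `φ` (the flow map from `t₀` to `t_k`) be differentiable at `a` with Jacobian
matrix `L t_k`. If `ξ` satisfies the backward adjoint equation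
`-ξ' = (Df(w t))ᵀ *ᵥ ξ` with terminal condition `ξ t_k = Cᵀ *ᵥ e_j`, then the gradient
at `a` of `a ↦ ⟨e_j, C *ᵥ φ a⟩` equals `ξ t₀`; equivalently
`(L t_k)ᵀ *ᵥ (Cᵀ *ᵥ e_j) = ξ t₀`. -/
theorem adjoint_gradient_formula {N q : ℕ}
    (f : (Fin N → ℝ) → (Fin N → ℝ)) (hf : ContDiff ℝ 1 f)
    (w : ℝ → (Fin N → ℝ)) (a : Fin N → ℝ) (t₀ tk : ℝ) (ht : t₀ ≤ tk)
    (hw : ∀ t ∈ Set.Icc t₀ tk, HasDerivAt w (f (w t)) t)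
    (hw0 : w t₀ = a)
    (L : ℝ → Matrix (Fin N) (Fin N) ℝ)
    (hL : ∀ t ∈ Set.Icc t₀ tk, HasDerivAt L (jacobian f (w t) * L t) t)
    (hL0 : L t₀ = 1)
    (φ : (Fin N → ℝ) → (Fin N → ℝ))
    (hφ : HasFDerivAt φ
      (LinearMap.toContinuousLinearMap (Matrix.mulVecLin (L tk))) a)
    (C : Matrix (Fin q) (Fin N) ℝ) (j : Fin q)
    (ξ : ℝ → (Fin N → ℝ))
    (hξ : ∀ t ∈ Set.Icc t₀ tk, HasDerivAt ξ (-((jacobian f (w t))ᵀ *ᵥ ξ t)) t)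
    (hξk : ξ tk = Cᵀ *ᵥ Pi.single j 1) :
    HasFDerivAt (fun x => Pi.single j (1 : ℝ) ⬝ᵥ (C *ᵥ φ x)) (dotCLM (ξ t₀)) a ∧
      (L tk)ᵀ *ᵥ (Cᵀ *ᵥ Pi.single j 1) = ξ t₀ := by

  -- Part 2 first: show (L t)ᵀ *ᵥ ξ t is constant on [t₀, tk].
  set J : ℝ → Matrix (Fin N) (Fin N) ℝ := fun t => jacobian f (w t) with hJdef
  have hL' : ∀ t ∈ Set.Icc t₀ tk, ∀ k i,
      HasDerivAt (fun t => L t k i) ((J t * L t) k i) t := by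
    intro t ht' k i
    exact hasDerivAt_pi.mp (hasDerivAt_pi.mp (hL t ht') k) i
  have hξ' : ∀ t ∈ Set.Icc t₀ tk, ∀ k,
      HasDerivAt (fun t => ξ t k) (-((J t)ᵀ *ᵥ ξ t) k) t := by
    intro t ht' k
    have := hasDerivAt_pi.mp (hξ t ht') k
    simpa using this
  set F : ℝ → (Fin N → ℝ) := fun t => (L t)ᵀ *ᵥ ξ t with hFdef
  have hFd : ∀ t ∈ Set.Icc t₀ tk, HasDerivAt F 0 t := by
    intro t ht'
    rw [hasDerivAt_pi]
    intro i
    have hsum : HasDerivAt (fun t => ∑ k, L t k i * ξ t k)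
        (∑ k, ((J t * L t) k i * ξ t k + L t k i * (-((J t)ᵀ *ᵥ ξ t) k))) t :=
      HasDerivAt.fun_sum fun k _ => (hL' t ht' k i).mul (hξ' t ht' k)
    have h0 : (∑ k, ((J t * L t) k i * ξ t k + L t k i * (-((J t)ᵀ *ᵥ ξ t) k))) = 0 := by
      simp only [Matrix.mul_apply, Matrix.mulVec, dotProduct, Matrix.transpose_apply,
        Finset.sum_mul, mul_neg, Finset.mul_sum]
      simp only [← Finset.sum_neg_distrib]
      rw [Finset.sum_add_distrib, Finset.sum_comm (f := fun k m => -(L t k i * (J t m k * ξ t m)))]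
      rw [← Finset.sum_add_distrib]
      apply Finset.sum_eq_zero
      intro k _
      rw [← Finset.sum_add_distrib]
      apply Finset.sum_eq_zero
      intro m _
      ring
    have : HasDerivAt (fun t => ∑ k, L t k i * ξ t k) 0 t := h0 ▸ hsum
    convert this using 2
    · rfl
    · rfl
    · rfl
    · simp
  have hcont : ContinuousOn F (Set.Icc t₀ tk) := fun t ht' =>
    (hFd t ht').continuousAt.continuousWithinAt
  have key : F tk = F t₀ :=
    constant_of_has_deriv_right_zero hcont
      (fun t ht' => (hFd t (Set.mem_Icc_of_Ico ht')).hasDerivWithinAt) tk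
      (Set.right_mem_Icc.mpr ht)
  have part2 : (L tk)ᵀ *ᵥ (Cᵀ *ᵥ Pi.single j 1) = ξ t₀ := by
    have h1 : F tk = (L tk)ᵀ *ᵥ (Cᵀ *ᵥ Pi.single j 1) := by
      simp [hFdef, hξk]
    have h2 : F t₀ = ξ t₀ := by
      simp [hFdef, hL0]
    rw [← h1, key, h2]
  refine ⟨?_, part2⟩
  have hcomp : HasFDerivAt (fun x => (Cᵀ *ᵥ Pi.single j (1:ℝ)) ⬝ᵥ φ x)
      ((dotCLM (Cᵀ *ᵥ Pi.single j 1)).comp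
        (LinearMap.toContinuousLinearMap (Matrix.mulVecLin (L tk)))) a :=
    (dotCLM (Cᵀ *ᵥ Pi.single j 1)).hasFDerivAt.comp a hφ
  have hfun : (fun x => Pi.single j (1:ℝ) ⬝ᵥ (C *ᵥ φ x))
      = fun x => (Cᵀ *ᵥ Pi.single j (1:ℝ)) ⬝ᵥ φ x := by
    funext x
    rw [Matrix.dotProduct_mulVec, Matrix.mulVec_transpose]
  have hclm : ((dotCLM (Cᵀ *ᵥ Pi.single j (1:ℝ))).comp
      (LinearMap.toContinuousLinearMap (Matrix.mulVecLin (L tk)))) = dotCLM (ξ t₀) := by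
    ext h
    show (Cᵀ *ᵥ Pi.single j 1) ⬝ᵥ (Matrix.mulVecLin (L tk) h) = ξ t₀ ⬝ᵥ h
    rw [Matrix.mulVecLin_apply, Matrix.dotProduct_mulVec, ← Matrix.mulVec_transpose, part2]
  rw [hfun, ← hclm]
  exact hcomp
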